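/- Let P be a locally finite poset colored by a finite simple graph Γ satisfying EC and AC, and suppose x < y are consecutive occurrences of a color b (i.e., κ(x) = κ(y) = b and no element of color b lies strictly between them). If there exists an edge weight function {η_a} with η_b(F,I) = +1 whenever b is the color of a maximal element of I, then the open interval (x,y) contains exactly two elements whose colors are adjacent to b (i.e., I2A holds at this pair). -/

import Mathlib

open Finsupp

section ColoredPosets

open scoped Classical

variable {P : Type*} {Γ : Type*} [PartialOrder P]

/-- `x` is a minimal element of the subset `F`. -/
def MinIn (F : Set P) (x : P) : Prop := x ∈ F ∧ ∀ y ∈ F, y ≤ x → y = x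

/-- `y` is a maximal element of the complement (the ideal) of `F`. -/
def MaxInCompl (F : Set P) (y : P) : Prop := y ∉ F ∧ ∀ z, z ∉ F → y ≤ z → z = y

/-- A split of `P`, recorded by its filter part; the ideal is the complement. -/
abbrev Split (P : Type*) [PartialOrder P] := {F : Set P // IsUpperSet F}

theorem upper_erase {F : Set P} (hF : IsUpperSet F) {x : P} (hx : MinIn F x) :
    IsUpperSet (F \ {x}) := by
  intro u v huv hu
  refine ⟨hF huv hu.1, fun hv => ?_⟩
  rw [Set.mem_singleton_iff] at hv
  subst hv
  exact hu.2 (Set.mem_singleton_iff.mpr (hx.2 u hu.1 huv))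

theorem upper_insert {F : Set P} (hF : IsUpperSet F) {y : P} (hy : MaxInCompl F y) :
    IsUpperSet (insert y F) := by
  intro u v huv hu
  rcases hu with rfl | hu
  · by_cases hvF : v ∈ F
    · exact Set.mem_insert_of_mem _ hvF
    · rw [hy.2 v hvF huv]; exact Set.mem_insert _ _
  · exact Set.mem_insert_of_mem _ (hF huv hu)

/-- The image of the basis vector `⟨F,I⟩` under the color raising operator `X_a`:
the sum of `⟨F-x, I+x⟩` over all minimal elements `x` of `F` of color `a`. -/
noncomputable def XF (κ : P → Γ) (a : Γ) (F : Split P) : Split P →₀ ℂ :=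
  ∑ᶠ x : P, if h : MinIn F.1 x ∧ κ x = a then
    Finsupp.single ⟨F.1 \ {x}, upper_erase F.2 h.1⟩ 1 else 0

/-- The color raising operator `X_a` on the free complex vector space on splits. -/
noncomputable def Xop (κ : P → Γ) (a : Γ) : Module.End ℂ (Split P →₀ ℂ) :=
  Finsupp.linearCombination ℂ (XF κ a)

/-- The image of the basis vector `⟨F,I⟩` under the color lowering operator `Y_a`:
the sum of `⟨F+y, I-y⟩` over all maximal elements `y` of `I` of color `a`. -/
noncomputable def YF (κ : P → Γ) (a : Γ) (F : Split P) : Split P →₀ ℂ :=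
  ∑ᶠ y : P, if h : MaxInCompl F.1 y ∧ κ y = a then
    Finsupp.single ⟨insert y F.1, upper_insert F.2 h.1⟩ 1 else 0

/-- The color lowering operator `Y_a`. -/
noncomputable def Yop (κ : P → Γ) (a : Γ) : Module.End ℂ (Split P →₀ ℂ) :=
  Finsupp.linearCombination ℂ (YF κ a)

/-- The diagonal operator with eigenvalue function `η a`. -/
noncomputable def Hop (η : Γ → Split P → ℂ) (a : Γ) : Module.End ℂ (Split P →₀ ℂ) :=
  Finsupp.linearCombination ℂ (fun F => η a F • Finsupp.single F (1 : ℂ))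

/-- The generalized Cartan matrix entries of the simple graph `Γ`. -/
noncomputable def theta (G : SimpleGraph Γ) (a b : Γ) : ℤ :=
  if a = b then 2 else if G.Adj a b then -1 else 0

/-- `Δ_b[(F',I'),(F,I)] = |P_b ∩ (I'−I)| − |P_b ∩ (I−I')|`. -/
noncomputable def Delta (κ : P → Γ) (b : Γ) (F' F : Split P) : ℤ :=
  (Nat.card {x : P // κ x = b ∧ x ∈ F.1 ∧ x ∉ F'.1} : ℤ)
    - (Nat.card {x : P // κ x = b ∧ x ∈ F'.1 ∧ x ∉ F.1} : ℤ)

/-- One covering step upward in the Hasse diagram of `FI(P)`: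
a minimal element of the filter is transferred to the ideal. -/
def SplitStep (F G : Split P) : Prop := ∃ x, MinIn F.1 x ∧ G.1 = F.1 \ {x}

/-- Two splits are in the same component when joined by a finite path in the
Hasse diagram of `FI(P)`, edges traversed in either direction. -/
def SameComponent (F G : Split P) : Prop :=
  Relation.ReflTransGen (fun A B => SplitStep A B ∨ SplitStep B A) F G

/-- Sum over the colors adjacent to `b` in `Γ`. -/
noncomputable def adjSum [Fintype Γ] (G : SimpleGraph Γ) (b : Γ) (f : Γ → ℤ) : ℤ :=
  ∑ c ∈ Finset.univ.filter (fun c => G.Adj c b), f c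

/-- An edge weight function on `FI(P)`. -/
def IsEdgeWeight (G : SimpleGraph Γ) (κ : P → Γ) (η : Γ → Split P → ℂ) : Prop :=
  ∀ (b : Γ) (F : Split P) (x : P) (hx : MinIn F.1 x),
    η b ⟨F.1 \ {x}, upper_erase F.2 hx⟩ - η b F = ((theta G (κ x) b : ℤ) : ℂ)

/-- A component weight function on `FI(P)`. -/
def IsComponentWeight [Fintype Γ] (G : SimpleGraph Γ) (κ : P → Γ)
    (η : Γ → Split P → ℂ) : Prop :=
  ∀ (b : Γ) (F F' : Split P), SameComponent F F' →
    η b F' - η b F =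
      ((2 * Delta κ b F' F - adjSum G b (fun c => Delta κ c F' F) : ℤ) : ℂ)


/-- Telescoping the edge weight condition along a finite chain of splits. -/
theorem path_sum (Gr : SimpleGraph Γ) (κ : P → Γ)
    (η : Γ → Split P → ℂ) (hη : IsEdgeWeight Gr κ η) (b : Γ) :
    ∀ (D : Finset P) (F Fg : Split P), Fg.1 ⊆ F.1 → F.1 \ Fg.1 = ↑D →
      η b Fg - η b F = ∑ t ∈ D, ((theta Gr (κ t) b : ℤ) : ℂ) := by
  intro D
  induction D using Finset.strongInduction with
  | _ D ih =>
    intro F Fg hsub hdiff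
    rcases D.eq_empty_or_nonempty with rfl | hne
    · have hFG : F = Fg := by
        apply Subtype.ext
        apply Set.Subset.antisymm _ hsub
        intro w hw
        by_contra hwg
        have : w ∈ F.1 \ Fg.1 := ⟨hw, hwg⟩
        rw [hdiff] at this
        simpa using this
      simp [hFG]
    · obtain ⟨t, htD, htmin⟩ := D.exists_minimal hne
      have htF : t ∈ F.1 \ Fg.1 := by
        rw [hdiff]; exact_mod_cast htD
      have hmin : MinIn F.1 t := by
        refine ⟨htF.1, fun s hs hst => ?_⟩
        by_contra hne'
        have hlt : s < t := lt_of_le_of_ne hst hne'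
        have hsD : s ∈ D := by
          rw [← Finset.mem_coe, ← hdiff]
          refine ⟨hs, fun hsg => htF.2 (Fg.2 hst hsg)⟩
        exact (lt_irrefl s) (hlt.trans_le (htmin hsD hlt.le))
      set F' : Split P := ⟨F.1 \ {t}, upper_erase F.2 hmin⟩ with hF'
      have hstep := hη b F t hmin
      have hsub' : Fg.1 ⊆ F'.1 := fun w hw =>
        ⟨hsub hw, by
          intro h
          rw [Set.mem_singleton_iff] at h
          subst h
          exact htF.2 hw⟩
      have hdiff' : F'.1 \ Fg.1 = ↑(D.erase t) := by
        show (F.1 \ {t}) \ Fg.1 = _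
        rw [Set.diff_diff_comm, hdiff, Finset.coe_erase]
      have hrec := ih (D.erase t) (Finset.erase_ssubset htD) F' Fg hsub' hdiff'
      have hsum := Finset.add_sum_erase D (fun t => ((theta Gr (κ t) b : ℤ) : ℂ)) htD
      calc η b Fg - η b F = (η b Fg - η b F') + (η b F' - η b F) := by ring
        _ = ∑ t' ∈ D.erase t, ((theta Gr (κ t') b : ℤ) : ℂ)
              + ((theta Gr (κ t) b : ℤ) : ℂ) := by rw [hrec, hstep]
        _ = ∑ t' ∈ D, ((theta Gr (κ t') b : ℤ) : ℂ) := by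
              rw [← hsum]; ring

/-- Under EC and AC, if an edge weight function with the `+1`
property exists, then between consecutive occurrences of a color there are
exactly two elements of adjacent color. -/
theorem stmt15 [LocallyFiniteOrder P] [Fintype Γ] (G : SimpleGraph Γ)
    (κ : P → Γ) (hsurj : Function.Surjective κ)
    (hEC : ∀ x y : P, κ x = κ y → x ≤ y ∨ y ≤ x)
    (hAC : ∀ x y : P, G.Adj (κ x) (κ y) → x ≤ y ∨ y ≤ x)
    (x y : P) (hxy : x < y) (hcol : κ x = κ y)
    (hcons : ∀ z ∈ Set.Ioo x y, κ z ≠ κ x)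
    (hex : ∃ η : Γ → Split P → ℂ, IsEdgeWeight G κ η ∧
      ∀ (b : Γ) (F : Split P), (∃ w : P, MaxInCompl F.1 w ∧ κ w = b) → η b F = 1) :
    Nat.card {z : P // z ∈ Set.Ioo x y ∧ G.Adj (κ z) (κ x)} = 2 := by
  classical
  obtain ⟨η, hη, h1⟩ := hex
  have hupFx : IsUpperSet {w : P | ¬ w ≤ y ∨ x < w} := by
    intro u v huv hu
    rcases hu with hu | hu
    · exact Or.inl fun hv => hu (huv.trans hv)
    · exact Or.inr (hu.trans_le huv)
  have hupFJ : IsUpperSet {w : P | ¬ w ≤ y} := fun u v huv hu hv => hu (huv.trans hv)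
  set Fx : Split P := ⟨{w : P | ¬ w ≤ y ∨ x < w}, hupFx⟩ with hFx
  set FJ : Split P := ⟨{w : P | ¬ w ≤ y}, hupFJ⟩ with hFJ
  have hsub : FJ.1 ⊆ Fx.1 := fun w hw => Or.inl hw
  have hdiff : Fx.1 \ FJ.1 = ↑(Finset.Ioc x y) := by
    ext w
    simp only [hFx, hFJ, Set.mem_diff, Set.mem_setOf_eq, Finset.coe_Ioc, Set.mem_Ioc,
      not_not]
    constructor
    · rintro ⟨hu | hu, hw⟩
      · exact absurd hw hu
      · exact ⟨hu, hw⟩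
    · rintro ⟨h1, h2⟩
      exact ⟨Or.inr h1, h2⟩
  have key := path_sum G κ η hη (κ x) (Finset.Ioc x y) Fx FJ hsub hdiff
  have hηJ : η (κ x) FJ = 1 := by
    refine h1 (κ x) FJ ⟨y, ⟨?_, ?_⟩, hcol.symm⟩
    · simp [hFJ]
    · intro z hz hyz
      simp only [hFJ, Set.mem_setOf_eq, not_not] at hz
      exact le_antisymm hz hyz
  have hηx : η (κ x) Fx = 1 := by
    refine h1 (κ x) Fx ⟨x, ⟨?_, ?_⟩, rfl⟩
    · simp only [hFx, Set.mem_setOf_eq, not_or, not_not, not_lt]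
      exact ⟨hxy.le, lt_irrefl x⟩
    · intro z hz hxz
      simp only [hFx, Set.mem_setOf_eq, not_or, not_not, not_lt] at hz
      exact (hxz.lt_or_eq.resolve_left hz.2).symm
  rw [hηJ, hηx, sub_self] at key
  have keyZ : (∑ t ∈ Finset.Ioc x y, theta G (κ t) (κ x)) = 0 := by
    have : ((∑ t ∈ Finset.Ioc x y, theta G (κ t) (κ x) : ℤ) : ℂ) = 0 := by
      push_cast
      exact key.symm
    exact_mod_cast this
  have hins : insert y (Finset.Ioo x y) = Finset.Ioc x y := Finset.Ioo_insert_right hxy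
  have hynot : y ∉ Finset.Ioo x y := by simp
  rw [← hins, Finset.sum_insert hynot] at keyZ
  have hθy : theta G (κ y) (κ x) = 2 := by simp [theta, hcol.symm]
  have hsum2 : ∑ t ∈ Finset.Ioo x y, theta G (κ t) (κ x) =
      -((Finset.Ioo x y).filter (fun z => G.Adj (κ z) (κ x))).card := by
    have hcongr : ∀ t ∈ Finset.Ioo x y,
        theta G (κ t) (κ x) = if G.Adj (κ t) (κ x) then (-1 : ℤ) else 0 := by
      intro t ht
      have hne : κ t ≠ κ x := hcons t (by simpa using ht)
      simp [theta, hne]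
    rw [Finset.sum_congr rfl hcongr, Finset.sum_ite, Finset.sum_const,
      Finset.sum_const_zero, add_zero, nsmul_eq_mul, mul_neg_one]
  rw [hθy, hsum2] at keyZ
  have hcard : (((Finset.Ioo x y).filter (fun z => G.Adj (κ z) (κ x))).card : ℤ) = 2 := by
    omega
  have hset : {z : P | z ∈ Set.Ioo x y ∧ G.Adj (κ z) (κ x)} =
      ↑((Finset.Ioo x y).filter (fun z => G.Adj (κ z) (κ x))) := by
    ext z
    simp [Set.mem_Ioo]
  have hnat : Nat.card {z : P // z ∈ Set.Ioo x y ∧ G.Adj (κ z) (κ x)} =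
      (((Finset.Ioo x y).filter (fun z => G.Adj (κ z) (κ x)))).card := by
    calc Nat.card {z : P // z ∈ Set.Ioo x y ∧ G.Adj (κ z) (κ x)}
        = Set.ncard {z : P | z ∈ Set.Ioo x y ∧ G.Adj (κ z) (κ x)} :=
          Nat.card_coe_set_eq _
      _ = _ := by rw [hset, Set.ncard_coe_finset]
  omega


end ColoredPosets
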